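/- arXiv:2505.02212 — 2 statements merged into one kernel-verified Lean document; each statement's English description precedes it below -/
import Mathlib

section
/- Let v : ℝ^d × [0,1] → ℝ^d be a velocity field such that (i) for some constant L ≥ 0, x ↦ v(x,t) is L-Lipschitz for every t ∈ [0,1], and (ii) v(·,t) is a triangular mapping for every t ∈ [0,1] (the j-th component v_j(x,t) depends only on x_1,…,x_j). Let γ, γ′ : [0,1] → ℝ^d be solutions of the ODE dγ(t)/dt = v(γ(t), t) on [0,1]. If the initial conditions agree in their first j coordinates, γ_k(0) = γ′_k(0) for all k ≤ j, then γ_k(t) = γ′_k(t) for all k ≤ j and all t ∈ [0,1]. Consequently, for each t ∈ [0,1] the time-t flow map x_0 ↦ γ^{x_0}(t) (where γ^{x_0} is the solution with γ^{x_0}(0) = x_0) is a triangular mapping of ℝ^d. -/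
/-- A map `F : ℝ^d → ℝ^d` is triangular if its `j`-th component depends only on
the first `j` coordinates (indices `k ≤ j`). -/
def Triangular {d : ℕ} (F : (Fin d → ℝ) → (Fin d → ℝ)) : Prop :=
  ∀ j : Fin d, ∀ x y : Fin d → ℝ, (∀ k, k ≤ j → x k = y k) → F x j = F y j

/-- For a velocity field `v` on `ℝ^d` that is Lipschitz in space (uniformly in
time) and triangular in its space variable for each time, any two solutions of
the ODE on `[0,1]` whose initial conditions agree in the first `j` coordinates
agree in the first `j` coordinates at all times; consequently, the time-`t`
flow map `x₀ ↦ Φ x₀ t` is a triangular mapping for every `t ∈ [0,1]`. -/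
theorem flow_triangular {d : ℕ} (v : (Fin d → ℝ) → ℝ → (Fin d → ℝ)) (L : ℝ) (hL : 0 ≤ L)
    (hlip : ∀ t ∈ Set.Icc (0 : ℝ) 1, ∀ a b : Fin d → ℝ, ‖v a t - v b t‖ ≤ L * ‖a - b‖)
    (htri : ∀ t ∈ Set.Icc (0 : ℝ) 1, ∀ j : Fin d, ∀ a b : Fin d → ℝ,
      (∀ k, k ≤ j → a k = b k) → v a t j = v b t j)
    (Φ : (Fin d → ℝ) → ℝ → (Fin d → ℝ))
    (hΦ0 : ∀ x₀, Φ x₀ 0 = x₀)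
    (hΦ : ∀ x₀, ∀ t ∈ Set.Icc (0 : ℝ) 1, HasDerivAt (Φ x₀) (v (Φ x₀ t) t) t) :
    (∀ γ γ' : ℝ → (Fin d → ℝ),
        (∀ t ∈ Set.Icc (0 : ℝ) 1, HasDerivAt γ (v (γ t) t) t) →
        (∀ t ∈ Set.Icc (0 : ℝ) 1, HasDerivAt γ' (v (γ' t) t) t) →
        ∀ j : Fin d, (∀ k, k ≤ j → γ 0 k = γ' 0 k) →
          ∀ t ∈ Set.Icc (0 : ℝ) 1, ∀ k, k ≤ j → γ t k = γ' t k) ∧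
      (∀ t ∈ Set.Icc (0 : ℝ) 1, Triangular fun x₀ => Φ x₀ t) := by
  have main : ∀ γ γ' : ℝ → (Fin d → ℝ),
      (∀ t ∈ Set.Icc (0 : ℝ) 1, HasDerivAt γ (v (γ t) t) t) →
      (∀ t ∈ Set.Icc (0 : ℝ) 1, HasDerivAt γ' (v (γ' t) t) t) →
      ∀ j : Fin d, (∀ k, k ≤ j → γ 0 k = γ' 0 k) →
        ∀ t ∈ Set.Icc (0 : ℝ) 1, ∀ k, k ≤ j → γ t k = γ' t k := by
    intro γ γ' hγ hγ' j h0 t ht k hk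
    -- truncation map
    set T : (Fin d → ℝ) →L[ℝ] (Fin d → ℝ) :=
      ContinuousLinearMap.pi (fun k : Fin d =>
        if k ≤ j then ContinuousLinearMap.proj k else 0) with hT
    have hTapp : ∀ (x : Fin d → ℝ) (k : Fin d), T x k = if k ≤ j then x k else 0 := by
      intro x k
      simp [hT, ContinuousLinearMap.pi_apply, apply_ite (f := fun
        (f : (Fin d → ℝ) →L[ℝ] ℝ) => f x)]
    have hTnorm : ∀ x : Fin d → ℝ, ‖T x‖ ≤ ‖x‖ := by
      intro x
      refine pi_norm_le_iff_of_nonneg (norm_nonneg x) |>.2 fun k => ?_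
      rw [hTapp]
      split
      · exact norm_le_pi_norm x k
      · simp
    -- truncated vector field
    set w : ℝ → (Fin d → ℝ) → (Fin d → ℝ) :=
      fun t y => if t ∈ Set.Icc (0 : ℝ) 1 then T (v y t) else 0 with hw
    have hwlip : ∀ t, LipschitzWith L.toNNReal (w t) := by
      intro t
      apply LipschitzWith.of_dist_le_mul
      intro a b
      rw [Real.coe_toNNReal L hL]
      by_cases ht' : t ∈ Set.Icc (0 : ℝ) 1
      · simp only [hw, if_pos ht']
        rw [dist_eq_norm, ← map_sub]
        calc ‖T (v a t - v b t)‖ ≤ ‖v a t - v b t‖ := hTnorm _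
          _ ≤ L * ‖a - b‖ := hlip t ht' a b
          _ = L * dist a b := by rw [dist_eq_norm]
      · simp only [hw, if_neg ht']
        simp
        positivity
    -- truncated curves solve the truncated ODE
    have hderiv : ∀ (δ : ℝ → (Fin d → ℝ)),
        (∀ t ∈ Set.Icc (0 : ℝ) 1, HasDerivAt δ (v (δ t) t) t) →
        ∀ t ∈ Set.Icc (0 : ℝ) 1, HasDerivAt (fun s => T (δ s)) (w t (T (δ t))) t := by
      intro δ hδ t ht'
      have h1 : HasDerivAt (fun s => T (δ s)) (T (v (δ t) t)) t :=
        (T.hasFDerivAt.comp_hasDerivAt t (hδ t ht'))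
      convert h1 using 1
      rw [hw]
      simp only [if_pos ht']
      funext k'
      rw [hTapp, hTapp]
      split
      · next hk' =>
        exact htri t ht' k' (T (δ t)) (δ t) (fun m hm => by
          rw [hTapp]; rw [if_pos (le_trans hm hk')]) |>.symm ▸
          (htri t ht' k' (T (δ t)) (δ t) (fun m hm => by
            rw [hTapp, if_pos (le_trans hm hk')]))
      · rfl
    have heq : Set.EqOn (fun s => T (γ s)) (fun s => T (γ' s)) (Set.Icc 0 1) := by
      apply ODE_solution_unique (v := w) (K := L.toNNReal) hwlip
      · intro s hs
        exact ((T.hasFDerivAt.comp_hasDerivAt s (hγ s hs)).continuousAt).continuousWithinAt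
      · intro s hs
        exact (hderiv γ hγ s (Set.mem_Icc_of_Ico hs)).hasDerivWithinAt
      · intro s hs
        exact ((T.hasFDerivAt.comp_hasDerivAt s (hγ' s hs)).continuousAt).continuousWithinAt
      · intro s hs
        exact (hderiv γ' hγ' s (Set.mem_Icc_of_Ico hs)).hasDerivWithinAt
      · funext k'
        rw [hTapp, hTapp]
        split
        · next hk' => exact h0 k' hk'
        · rfl
    have := congrFun (heq ht) k
    simp only [hTapp, if_pos hk] at this
    exact this
  refine ⟨main, ?_⟩
  intro t ht j x y hxy
  exact main (Φ x) (Φ y) (hΦ x) (hΦ y) j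
    (fun k hk => by rw [hΦ0, hΦ0]; exact hxy k hk) t ht j le_rfl
end

section
/- Let v : ℝ^d × [0,1] → ℝ^d be a velocity field such that (i) for some constant L ≥ 0, x ↦ v(x,t) is L-Lipschitz for every t ∈ [0,1], and (ii) v(·,t) is a triangular mapping for every t ∈ [0,1]. Suppose that for every initial condition x_0 ∈ ℝ^d there is a (necessarily unique) solution γ^{x_0} : [0,1] → ℝ^d of dγ/dt = v(γ(t),t) with γ^{x_0}(0) = x_0. Then for every t ∈ [0,1], the flow map 𝒯(·,t) : x_0 ↦ γ^{x_0}(t) is a TMI mapping: it is triangular, and for each j ∈ {1,…,d}, whenever two initial conditions x_0, x_0′ agree in their first j−1 coordinates and satisfy (x_0)_j < (x_0′)_j, one has γ^{x_0}_j(t) < γ^{x_0′}_j(t). -/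
/-- A TMI mapping: a triangular map each of whose components is strictly
increasing in its last coordinate, for every fixed prefix. -/
def IsTMI {d : ℕ} (F : (Fin d → ℝ) → (Fin d → ℝ)) : Prop :=
  Triangular F ∧
    ∀ j : Fin d, ∀ x y : Fin d → ℝ,
      (∀ k, k < j → x k = y k) → x j < y j → F x j < F y j

/-- Scalar Grönwall: if `f a = 0` and `|f'| ≤ L |f|` then `f ≡ 0` on `[a,b]`. -/
lemma gronwall_zero (L a b : ℝ) (hab : a ≤ b) (f g : ℝ → ℝ)
    (hf : ∀ t ∈ Set.Icc a b, HasDerivAt f (g t) t)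
    (hb : ∀ t ∈ Set.Icc a b, |g t| ≤ L * |f t|)
    (h0 : f a = 0) : ∀ t ∈ Set.Icc a b, f t = 0 := by
  have hcont : ContinuousOn f (Set.Icc a b) := fun t ht =>
    (hf t ht).continuousAt.continuousWithinAt
  intro t ht
  have := norm_le_gronwallBound_of_norm_deriv_right_le (δ := 0) (K := L) (ε := 0)
    (f := f) (f' := g) hcont
    (fun s hs => (hf s (Set.Ico_subset_Icc_self hs)).hasDerivWithinAt)
    (by simp [h0])
    (fun s hs => by
      simpa [Real.norm_eq_abs] using hb s (Set.Ico_subset_Icc_self hs)) t ht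
  rw [gronwallBound_ε0_δ0] at this
  exact norm_le_zero_iff.mp this

/-- Scalar Grönwall, positivity version: if `f 0 > 0` and `|f'| ≤ L |f|`
then `f > 0` on `[0,1]`. -/
lemma gronwall_pos (L : ℝ) (f g : ℝ → ℝ)
    (hf : ∀ t ∈ Set.Icc (0:ℝ) 1, HasDerivAt f (g t) t)
    (hb : ∀ t ∈ Set.Icc (0:ℝ) 1, |g t| ≤ L * |f t|)
    (h0 : 0 < f 0) : ∀ t ∈ Set.Icc (0:ℝ) 1, 0 < f t := by
  have hne : ∀ t ∈ Set.Icc (0:ℝ) 1, f t ≠ 0 := by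
    intro t₀ ht₀ hz
    -- reverse time on [0, t₀]
    have hmem : ∀ s ∈ Set.Icc (0:ℝ) t₀, t₀ - s ∈ Set.Icc (0:ℝ) 1 :=
      fun s hs => ⟨by linarith [hs.2], by linarith [hs.1, ht₀.2]⟩
    have hF : ∀ s ∈ Set.Icc (0:ℝ) t₀,
        HasDerivAt (fun s => f (t₀ - s)) (-(g (t₀ - s))) s := by
      intro s hs
      have h1 : HasDerivAt (fun s : ℝ => t₀ - s) (-1) s := by
        simpa using (hasDerivAt_id s).const_sub t₀
      have := (hf (t₀ - s) (hmem s hs)).comp s h1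
      exact this.congr_deriv (by ring)
    have := gronwall_zero L 0 t₀ ht₀.1 (fun s => f (t₀ - s)) (fun s => -(g (t₀ - s)))
      hF (fun s hs => by simpa using hb (t₀ - s) (hmem s hs)) (by simpa using hz)
      t₀ ⟨ht₀.1, le_rfl⟩
    simp at this
    exact absurd this (ne_of_gt h0)
  intro t ht
  rcases lt_trichotomy (f t) 0 with h | h | h
  · exfalso
    have hcont : ContinuousOn f (Set.Icc 0 t) := fun s hs =>
      (hf s ⟨hs.1, le_trans hs.2 ht.2⟩).continuousAt.continuousWithinAt
    have : (0:ℝ) ∈ Set.Icc (f t) (f 0) := ⟨h.le, h0.le⟩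
    rcases intermediate_value_Icc' ht.1 hcont this with ⟨s, hs, hfs⟩
    exact hne s ⟨hs.1, le_trans hs.2 ht.2⟩ hfs
  · exact absurd h (hne t ht)
  · exact h

/-- For a velocity field `v` on `ℝ^d` that is Lipschitz in space (uniformly in
time) and triangular in its space variable for each time, the time-`t` flow
map `x₀ ↦ Φ x₀ t` of the ODE `dγ/dt = v(γ(t),t)` is a TMI mapping for every
`t ∈ [0,1]`: it is triangular, and strictly increasing in the `j`-th initial
coordinate for fixed first `j−1` initial coordinates. -/
theorem flow_tmi {d : ℕ} (v : (Fin d → ℝ) → ℝ → (Fin d → ℝ)) (L : ℝ) (hL : 0 ≤ L)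
    (hlip : ∀ t ∈ Set.Icc (0 : ℝ) 1, ∀ a b : Fin d → ℝ, ‖v a t - v b t‖ ≤ L * ‖a - b‖)
    (htri : ∀ t ∈ Set.Icc (0 : ℝ) 1, ∀ j : Fin d, ∀ a b : Fin d → ℝ,
      (∀ k, k ≤ j → a k = b k) → v a t j = v b t j)
    (Φ : (Fin d → ℝ) → ℝ → (Fin d → ℝ))
    (hΦ0 : ∀ x₀, Φ x₀ 0 = x₀)
    (hΦ : ∀ x₀, ∀ t ∈ Set.Icc (0 : ℝ) 1, HasDerivAt (Φ x₀) (v (Φ x₀ t) t) t) :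
    ∀ t ∈ Set.Icc (0 : ℝ) 1, IsTMI fun x₀ => Φ x₀ t := by
  -- componentwise Lipschitz estimate using triangularity
  have clip : ∀ t ∈ Set.Icc (0:ℝ) 1, ∀ j : Fin d, ∀ a b : Fin d → ℝ,
      (∀ k, k < j → a k = b k) → |v a t j - v b t j| ≤ L * |a j - b j| := by
    intro t ht j a b hab
    set c : Fin d → ℝ := Function.update a j (b j) with hc
    have hcb : ∀ k, k ≤ j → c k = b k := by
      intro k hk
      rcases eq_or_lt_of_le hk with rfl | hk'
      · simp [hc]
      · rw [hc, Function.update_of_ne (ne_of_lt hk')]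
        exact hab k hk'
    have h1 : v c t j = v b t j := htri t ht j c b hcb
    have h2 : |v a t j - v c t j| ≤ ‖v a t - v c t‖ := by
      simpa [Real.norm_eq_abs] using norm_le_pi_norm (v a t - v c t) j
    have h3 : ‖a - c‖ ≤ |a j - b j| := by
      apply pi_norm_le_iff_of_nonneg (abs_nonneg _) |>.2
      intro i
      rcases eq_or_ne i j with rfl | hij
      · simp [hc, Real.norm_eq_abs]
      · simp [hc, Function.update_of_ne hij, Real.norm_eq_abs]
    calc |v a t j - v b t j| = |v a t j - v c t j| := by rw [h1]
      _ ≤ ‖v a t - v c t‖ := h2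
      _ ≤ L * ‖a - c‖ := hlip t ht a c
      _ ≤ L * |a j - b j| := by exact mul_le_mul_of_nonneg_left h3 hL
  -- component derivative
  have hder : ∀ x₀ : Fin d → ℝ, ∀ j : Fin d, ∀ t ∈ Set.Icc (0:ℝ) 1,
      HasDerivAt (fun s => Φ x₀ s j) (v (Φ x₀ t) t j) t := by
    intro x₀ j t ht
    exact hasDerivAt_pi.1 (hΦ x₀ t ht) j
  -- key: triangularity for all times, by strong induction on coordinates
  have key : ∀ n : ℕ, ∀ j : Fin d, (j : ℕ) < n → ∀ x y : Fin d → ℝ,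
      (∀ k, k ≤ j → x k = y k) → ∀ s ∈ Set.Icc (0:ℝ) 1, Φ x s j = Φ y s j := by
    intro n
    induction n with
    | zero => intro j hj; omega
    | succ n ih =>
      intro j hj x y hxy
      have hpre : ∀ k : Fin d, k < j → ∀ u ∈ Set.Icc (0:ℝ) 1, Φ x u k = Φ y u k := by
        intro k hk u hu
        exact ih k (by omega) x y (fun k' hk' => hxy k' (le_trans hk' hk.le)) u hu
      have hbd : ∀ u ∈ Set.Icc (0:ℝ) 1,
          |v (Φ x u) u j - v (Φ y u) u j| ≤ L * |Φ x u j - Φ y u j| :=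
        fun u hu => clip u hu j _ _ (fun k hk => hpre k hk u hu)
      have hzero := gronwall_zero L 0 1 zero_le_one
        (fun u => Φ x u j - Φ y u j)
        (fun u => v (Φ x u) u j - v (Φ y u) u j)
        (fun u hu => (hder x j u hu).sub (hder y j u hu))
        hbd
        (by simp [hΦ0, hxy j le_rfl])
      intro s hs
      exact sub_eq_zero.mp (hzero s hs)
  intro t ht
  constructor
  · intro j x y hxy
    exact key ((j : ℕ) + 1) j (Nat.lt_succ_self _) x y hxy t ht
  · intro j x y hxy hlt
    have hpre : ∀ k : Fin d, k < j → ∀ u ∈ Set.Icc (0:ℝ) 1, Φ x u k = Φ y u k := by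
      intro k hk u hu
      exact key ((k : ℕ) + 1) k (Nat.lt_succ_self _) x y
        (fun k' hk' => hxy k' (lt_of_le_of_lt hk' hk)) u hu
    have hbd : ∀ u ∈ Set.Icc (0:ℝ) 1,
        |v (Φ y u) u j - v (Φ x u) u j| ≤ L * |Φ y u j - Φ x u j| :=
      fun u hu => clip u hu j _ _ (fun k hk => (hpre k hk u hu).symm)
    have hpos := gronwall_pos L
      (fun u => Φ y u j - Φ x u j)
      (fun u => v (Φ y u) u j - v (Φ x u) u j)
      (fun u hu => (hder y j u hu).sub (hder x j u hu))
      hbd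
      (by simp [hΦ0]; linarith)
      t ht
    simpa using sub_pos.mp hpos
end
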